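/- For 0 < γ < 1 and every integer i ≥ 1, the coefficient m_i = 4((i+1)^{3-γ} - (i-1)^{3-γ}) - (3-γ)((i+1)^{2-γ} + 6 i^{2-γ} + (i-1)^{2-γ}) satisfies m_i ≥ 2(3-γ)(2-γ)(1-γ) i^{-γ} (1/6 - 7/60) > 0. -/

import Mathlib

open Real Set

private lemma nonneg_aux (φ φ' : ℝ → ℝ) (h0 : φ 0 = 0)
    (hd : ∀ t ∈ Icc (0:ℝ) 1, HasDerivAt φ (φ' t) t)
    (hp : ∀ t ∈ Icc (0:ℝ) 1, 0 ≤ φ' t) : ∀ t ∈ Icc (0:ℝ) 1, 0 ≤ φ t := by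
  intro t ht
  have mono : MonotoneOn φ (Icc (0:ℝ) 1) := by
    apply monotoneOn_of_deriv_nonneg (convex_Icc 0 1)
    · exact fun x hx => (hd x hx).continuousAt.continuousWithinAt
    · intro x hx
      rw [interior_Icc] at hx
      exact (hd x (Ioo_subset_Icc_self hx)).differentiableAt.differentiableWithinAt
    · intro x hx
      rw [interior_Icc] at hx
      rw [(hd x (Ioo_subset_Icc_self hx)).deriv]
      exact hp x (Ioo_subset_Icc_self hx)
  calc (0:ℝ) = φ 0 := h0.symm
  _ ≤ φ t := mono (left_mem_Icc.2 zero_le_one) ht ht.1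

private lemma hasDerivAt_plus (a p t : ℝ) (h : 0 < a + t) :
    HasDerivAt (fun s => (a + s) ^ p) (p * (a + t) ^ (p - 1)) t := by
  have h1 : HasDerivAt (fun s : ℝ => a + s) 1 t := (hasDerivAt_id t).const_add a
  simpa [Function.comp_def] using (Real.hasDerivAt_rpow_const (p := p) (Or.inl h.ne')).comp t h1

private lemma hasDerivAt_minus (a p t : ℝ) (h : 0 < a - t) :
    HasDerivAt (fun s => (a - s) ^ p) (-(p * (a - t) ^ (p - 1))) t := by
  have h1 : HasDerivAt (fun s : ℝ => a - s) (-1) t := by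
    simpa using (hasDerivAt_id t).const_sub a
  have := (Real.hasDerivAt_rpow_const (p := p) (Or.inl h.ne')).comp t h1
  simpa [Function.comp_def] using this.congr_deriv (by ring)

section chains

private lemma chainP {γ a : ℝ} (hγ0 : 0 < γ) (hγ1 : γ < 1) (ha : 2 ≤ a) :
    ∀ t ∈ Icc (0:ℝ) 1, 0 ≤ (a+t)^(3-γ) - a^(3-γ) - (3-γ)*a^(2-γ)*t
      - (3-γ)*(2-γ)*a^(1-γ)*t^2/2 - (3-γ)*(2-γ)*(1-γ)*a^(-γ)*t^3/6
      + (3-γ)*(2-γ)*(1-γ)*γ*a^(-1-γ)*t^4/24 := by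
  have key1 : ∀ t ∈ Icc (0:ℝ) 1, 0 ≤ (a+t)^(-γ) - a^(-γ) + γ*a^(-1-γ)*t := by
    apply nonneg_aux _ (fun t => γ*a^(-1-γ) - γ*(a+t)^(-1-γ))
    · norm_num
    · intro t ht
      have h1 : 0 < a + t := by have := ht.1; linarith
      have hh := (hasDerivAt_plus a (-γ) t h1).sub_const (a^(-γ)) |>.add
        ((hasDerivAt_id t).const_mul (γ*a^(-1-γ)))
      rw [show (-γ - 1 : ℝ) = -1-γ by ring] at hh
      exact hh.congr_deriv (by ring)
    · intro t ht
      have h2 : (a+t)^(-1-γ) ≤ a^(-1-γ) :=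
        Real.rpow_le_rpow_of_nonpos (by linarith) (by linarith [ht.1]) (by linarith)
      nlinarith
  have key2 : ∀ t ∈ Icc (0:ℝ) 1, 0 ≤ (a+t)^(1-γ) - a^(1-γ) - (1-γ)*a^(-γ)*t
      + (1-γ)*γ*a^(-1-γ)*t^2/2 := by
    apply nonneg_aux _ (fun t => (1-γ)*((a+t)^(-γ) - a^(-γ) + γ*a^(-1-γ)*t))
    · norm_num
    · intro t ht
      have h1 : 0 < a + t := by have := ht.1; linarith
      have hh := ((hasDerivAt_plus a (1-γ) t h1).sub_const (a^(1-γ)) |>.sub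
        ((hasDerivAt_id t).const_mul ((1-γ)*a^(-γ)))).add
        (((hasDerivAt_pow 2 t).const_mul ((1-γ)*γ*a^(-1-γ))).div_const 2)
      rw [show (1-γ-1 : ℝ) = -γ by ring] at hh
      exact hh.congr_deriv (by ring)
    · intro t ht
      exact mul_nonneg (by linarith) (key1 t ht)
  have key3 : ∀ t ∈ Icc (0:ℝ) 1, 0 ≤ (a+t)^(2-γ) - a^(2-γ) - (2-γ)*a^(1-γ)*t
      - (2-γ)*(1-γ)*a^(-γ)*t^2/2 + (2-γ)*(1-γ)*γ*a^(-1-γ)*t^3/6 := by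
    apply nonneg_aux _ (fun t => (2-γ)*((a+t)^(1-γ) - a^(1-γ) - (1-γ)*a^(-γ)*t
      + (1-γ)*γ*a^(-1-γ)*t^2/2))
    · norm_num
    · intro t ht
      have h1 : 0 < a + t := by have := ht.1; linarith
      have hh := (((hasDerivAt_plus a (2-γ) t h1).sub_const (a^(2-γ)) |>.sub
        ((hasDerivAt_id t).const_mul ((2-γ)*a^(1-γ)))).sub
        (((hasDerivAt_pow 2 t).const_mul ((2-γ)*(1-γ)*a^(-γ))).div_const 2)).add
        (((hasDerivAt_pow 3 t).const_mul ((2-γ)*(1-γ)*γ*a^(-1-γ))).div_const 6)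
      rw [show (2-γ-1 : ℝ) = 1-γ by ring] at hh
      exact hh.congr_deriv (by ring)
    · intro t ht
      exact mul_nonneg (by linarith) (key2 t ht)
  apply nonneg_aux _ (fun t => (3-γ)*((a+t)^(2-γ) - a^(2-γ) - (2-γ)*a^(1-γ)*t
    - (2-γ)*(1-γ)*a^(-γ)*t^2/2 + (2-γ)*(1-γ)*γ*a^(-1-γ)*t^3/6))
  · norm_num
  · intro t ht
    have h1 : 0 < a + t := by have := ht.1; linarith
    have hh := ((((hasDerivAt_plus a (3-γ) t h1).sub_const (a^(3-γ)) |>.sub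
      ((hasDerivAt_id t).const_mul ((3-γ)*a^(2-γ)))).sub
      (((hasDerivAt_pow 2 t).const_mul ((3-γ)*(2-γ)*a^(1-γ))).div_const 2)).sub
      (((hasDerivAt_pow 3 t).const_mul ((3-γ)*(2-γ)*(1-γ)*a^(-γ))).div_const 6)).add
      (((hasDerivAt_pow 4 t).const_mul ((3-γ)*(2-γ)*(1-γ)*γ*a^(-1-γ))).div_const 24)
    rw [show (3-γ-1 : ℝ) = 2-γ by ring] at hh
    exact hh.congr_deriv (by ring)
  · intro t ht
    exact mul_nonneg (by linarith) (key3 t ht)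

private lemma chainG {γ a : ℝ} (hγ0 : 0 < γ) (hγ1 : γ < 1) (ha : 2 ≤ a) :
    ∀ t ∈ Icc (0:ℝ) 1, 0 ≤ a^(3-γ) - (3-γ)*a^(2-γ)*t + (3-γ)*(2-γ)*a^(1-γ)*t^2/2
      - (3-γ)*(2-γ)*(1-γ)*a^(-γ)*t^3/6 - (3-γ)*(2-γ)*(1-γ)*γ*a^(-1-γ)*t^4/24
      - (a-t)^(3-γ) := by
  have key1 : ∀ t ∈ Icc (0:ℝ) 1, 0 ≤ (a-t)^(-γ) - a^(-γ) - γ*a^(-1-γ)*t := by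
    apply nonneg_aux _ (fun t => γ*(a-t)^(-1-γ) - γ*a^(-1-γ))
    · norm_num
    · intro t ht
      have h1 : 0 < a - t := by have := ht.2; linarith
      have hh := (hasDerivAt_minus a (-γ) t h1).sub_const (a^(-γ)) |>.sub
        ((hasDerivAt_id t).const_mul (γ*a^(-1-γ)))
      rw [show (-γ - 1 : ℝ) = -1-γ by ring] at hh
      exact hh.congr_deriv (by ring)
    · intro t ht
      have h1 : 0 < a - t := by have := ht.2; linarith
      have h2 : a^(-1-γ) ≤ (a-t)^(-1-γ) :=
        Real.rpow_le_rpow_of_nonpos h1 (by linarith [ht.1]) (by linarith)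
      nlinarith
  have key2 : ∀ t ∈ Icc (0:ℝ) 1, 0 ≤ a^(1-γ) - (a-t)^(1-γ) - (1-γ)*a^(-γ)*t
      - (1-γ)*γ*a^(-1-γ)*t^2/2 := by
    apply nonneg_aux _ (fun t => (1-γ)*((a-t)^(-γ) - a^(-γ) - γ*a^(-1-γ)*t))
    · norm_num
    · intro t ht
      have h1 : 0 < a - t := by have := ht.2; linarith
      have hh := (((hasDerivAt_const t (a^(1-γ))).sub (hasDerivAt_minus a (1-γ) t h1)).sub
        ((hasDerivAt_id t).const_mul ((1-γ)*a^(-γ)))).sub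
        (((hasDerivAt_pow 2 t).const_mul ((1-γ)*γ*a^(-1-γ))).div_const 2)
      rw [show (1-γ-1 : ℝ) = -γ by ring] at hh
      exact hh.congr_deriv (by ring)
    · intro t ht
      exact mul_nonneg (by linarith) (key1 t ht)
  have key3 : ∀ t ∈ Icc (0:ℝ) 1, 0 ≤ (a-t)^(2-γ) - a^(2-γ) + (2-γ)*a^(1-γ)*t
      - (2-γ)*(1-γ)*a^(-γ)*t^2/2 - (2-γ)*(1-γ)*γ*a^(-1-γ)*t^3/6 := by
    apply nonneg_aux _ (fun t => (2-γ)*(a^(1-γ) - (a-t)^(1-γ) - (1-γ)*a^(-γ)*t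
      - (1-γ)*γ*a^(-1-γ)*t^2/2))
    · norm_num
    · intro t ht
      have h1 : 0 < a - t := by have := ht.2; linarith
      have hh := ((((hasDerivAt_minus a (2-γ) t h1).sub_const (a^(2-γ))).add
        ((hasDerivAt_id t).const_mul ((2-γ)*a^(1-γ)))).sub
        (((hasDerivAt_pow 2 t).const_mul ((2-γ)*(1-γ)*a^(-γ))).div_const 2)).sub
        (((hasDerivAt_pow 3 t).const_mul ((2-γ)*(1-γ)*γ*a^(-1-γ))).div_const 6)
      rw [show (2-γ-1 : ℝ) = 1-γ by ring] at hh
      exact hh.congr_deriv (by ring)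
    · intro t ht
      exact mul_nonneg (by linarith) (key2 t ht)
  apply nonneg_aux _ (fun t => (3-γ)*((a-t)^(2-γ) - a^(2-γ) + (2-γ)*a^(1-γ)*t
    - (2-γ)*(1-γ)*a^(-γ)*t^2/2 - (2-γ)*(1-γ)*γ*a^(-1-γ)*t^3/6))
  · norm_num
  · intro t ht
    have h1 : 0 < a - t := by have := ht.2; linarith
    have hh := (((((hasDerivAt_const t (a^(3-γ))).sub
      ((hasDerivAt_id t).const_mul ((3-γ)*a^(2-γ)))).add
      (((hasDerivAt_pow 2 t).const_mul ((3-γ)*(2-γ)*a^(1-γ))).div_const 2)).sub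
      (((hasDerivAt_pow 3 t).const_mul ((3-γ)*(2-γ)*(1-γ)*a^(-γ))).div_const 6)).sub
      (((hasDerivAt_pow 4 t).const_mul ((3-γ)*(2-γ)*(1-γ)*γ*a^(-1-γ))).div_const 24)).sub
      (hasDerivAt_minus a (3-γ) t h1)
    rw [show (3-γ-1 : ℝ) = 2-γ by ring] at hh
    exact hh.congr_deriv (by ring)
  · intro t ht
    exact mul_nonneg (by linarith) (key3 t ht)

private lemma chainS {γ a : ℝ} (hγ0 : 0 < γ) (hγ1 : γ < 1) (ha : 2 ≤ a) :
    ∀ t ∈ Icc (0:ℝ) 1, 0 ≤ (2-γ)*(1-γ)*γ*(1+γ)*a^(-2-γ)*t^4/24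
      - ((a+t)^(2-γ) - a^(2-γ) - (2-γ)*a^(1-γ)*t - (2-γ)*(1-γ)*a^(-γ)*t^2/2
        + (2-γ)*(1-γ)*γ*a^(-1-γ)*t^3/6) := by
  have key1 : ∀ t ∈ Icc (0:ℝ) 1, 0 ≤ (2-γ)*(1-γ)*γ*(1+γ)*a^(-2-γ)*t
      + γ*(2-γ)*(1-γ)*((a+t)^(-1-γ) - a^(-1-γ)) := by
    apply nonneg_aux _ (fun t => (2-γ)*(1-γ)*γ*(1+γ)*a^(-2-γ)
      - γ*(2-γ)*(1-γ)*(1+γ)*(a+t)^(-2-γ))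
    · norm_num
    · intro t ht
      have h1 : 0 < a + t := by have := ht.1; linarith
      have hh := ((hasDerivAt_id t).const_mul ((2-γ)*(1-γ)*γ*(1+γ)*a^(-2-γ))).add
        (((hasDerivAt_plus a (-1-γ) t h1).sub_const (a^(-1-γ))).const_mul (γ*(2-γ)*(1-γ)))
      rw [show (-1-γ-1 : ℝ) = -2-γ by ring] at hh
      exact hh.congr_deriv (by ring)
    · intro t ht
      have h2 : (a+t)^(-2-γ) ≤ a^(-2-γ) :=
        Real.rpow_le_rpow_of_nonpos (by linarith) (by linarith [ht.1]) (by linarith)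
      have hK : (0:ℝ) ≤ γ*(2-γ)*(1-γ)*(1+γ) := by
        apply mul_nonneg (mul_nonneg (mul_nonneg _ _) _) <;> linarith
      nlinarith [mul_le_mul_of_nonneg_left h2 hK]
  have key2 : ∀ t ∈ Icc (0:ℝ) 1, 0 ≤ (2-γ)*(1-γ)*γ*(1+γ)*a^(-2-γ)*t^2/2
      - (2-γ)*(1-γ)*((a+t)^(-γ) - a^(-γ) + γ*a^(-1-γ)*t) := by
    apply nonneg_aux _ (fun t => (2-γ)*(1-γ)*γ*(1+γ)*a^(-2-γ)*t
      + γ*(2-γ)*(1-γ)*((a+t)^(-1-γ) - a^(-1-γ)))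
    · norm_num
    · intro t ht
      have h1 : 0 < a + t := by have := ht.1; linarith
      have hh := (((hasDerivAt_pow 2 t).const_mul ((2-γ)*(1-γ)*γ*(1+γ)*a^(-2-γ))).div_const 2).sub
        ((((hasDerivAt_plus a (-γ) t h1).sub_const (a^(-γ))).add
          ((hasDerivAt_id t).const_mul (γ*a^(-1-γ)))).const_mul ((2-γ)*(1-γ)))
      rw [show (-γ-1 : ℝ) = -1-γ by ring] at hh
      exact hh.congr_deriv (by ring)
    · intro t ht
      exact key1 t ht
  have key3 : ∀ t ∈ Icc (0:ℝ) 1, 0 ≤ (2-γ)*(1-γ)*γ*(1+γ)*a^(-2-γ)*t^3/6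
      - (2-γ)*((a+t)^(1-γ) - a^(1-γ) - (1-γ)*a^(-γ)*t + (1-γ)*γ*a^(-1-γ)*t^2/2) := by
    apply nonneg_aux _ (fun t => (2-γ)*(1-γ)*γ*(1+γ)*a^(-2-γ)*t^2/2
      - (2-γ)*(1-γ)*((a+t)^(-γ) - a^(-γ) + γ*a^(-1-γ)*t))
    · norm_num
    · intro t ht
      have h1 : 0 < a + t := by have := ht.1; linarith
      have hh := (((hasDerivAt_pow 3 t).const_mul ((2-γ)*(1-γ)*γ*(1+γ)*a^(-2-γ))).div_const 6).sub
        (((((hasDerivAt_plus a (1-γ) t h1).sub_const (a^(1-γ))).sub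
          ((hasDerivAt_id t).const_mul ((1-γ)*a^(-γ)))).add
          (((hasDerivAt_pow 2 t).const_mul ((1-γ)*γ*a^(-1-γ))).div_const 2)).const_mul (2-γ))
      rw [show (1-γ-1 : ℝ) = -γ by ring] at hh
      exact hh.congr_deriv (by ring)
    · intro t ht
      exact key2 t ht
  apply nonneg_aux _ (fun t => (2-γ)*(1-γ)*γ*(1+γ)*a^(-2-γ)*t^3/6
    - (2-γ)*((a+t)^(1-γ) - a^(1-γ) - (1-γ)*a^(-γ)*t + (1-γ)*γ*a^(-1-γ)*t^2/2))
  · norm_num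
  · intro t ht
    have h1 : 0 < a + t := by have := ht.1; linarith
    have hh := (((hasDerivAt_pow 4 t).const_mul ((2-γ)*(1-γ)*γ*(1+γ)*a^(-2-γ))).div_const 24).sub
      (((((hasDerivAt_plus a (2-γ) t h1).sub_const (a^(2-γ))).sub
        ((hasDerivAt_id t).const_mul ((2-γ)*a^(1-γ)))).sub
        (((hasDerivAt_pow 2 t).const_mul ((2-γ)*(1-γ)*a^(-γ))).div_const 2)).add
        (((hasDerivAt_pow 3 t).const_mul ((2-γ)*(1-γ)*γ*a^(-1-γ))).div_const 6))
    rw [show (2-γ-1 : ℝ) = 1-γ by ring] at hh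
    exact hh.congr_deriv (by ring)
  · intro t ht
    exact key3 t ht

private lemma chainZ {γ a : ℝ} (hγ0 : 0 < γ) (hγ1 : γ < 1) (ha : 2 ≤ a) :
    ∀ t ∈ Icc (0:ℝ) 1, 0 ≤ (2-γ)*(1-γ)*γ*(1+γ)*(a-1)^(-2-γ)*t^4/24
      - ((a-t)^(2-γ) - a^(2-γ) + (2-γ)*a^(1-γ)*t - (2-γ)*(1-γ)*a^(-γ)*t^2/2
        - (2-γ)*(1-γ)*γ*a^(-1-γ)*t^3/6) := by
  have key1 : ∀ t ∈ Icc (0:ℝ) 1, 0 ≤ (2-γ)*(1-γ)*γ*(1+γ)*(a-1)^(-2-γ)*t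
      - γ*(2-γ)*(1-γ)*((a-t)^(-1-γ) - a^(-1-γ)) := by
    apply nonneg_aux _ (fun t => (2-γ)*(1-γ)*γ*(1+γ)*(a-1)^(-2-γ)
      - γ*(2-γ)*(1-γ)*(1+γ)*(a-t)^(-2-γ))
    · norm_num
    · intro t ht
      have h1 : 0 < a - t := by have := ht.2; linarith
      have hh := ((hasDerivAt_id t).const_mul ((2-γ)*(1-γ)*γ*(1+γ)*(a-1)^(-2-γ))).sub
        (((hasDerivAt_minus a (-1-γ) t h1).sub_const (a^(-1-γ))).const_mul (γ*(2-γ)*(1-γ)))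
      rw [show (-1-γ-1 : ℝ) = -2-γ by ring] at hh
      exact hh.congr_deriv (by ring)
    · intro t ht
      have h2 : (a-t)^(-2-γ) ≤ (a-1)^(-2-γ) :=
        Real.rpow_le_rpow_of_nonpos (by linarith) (by linarith [ht.2]) (by linarith)
      have hK : (0:ℝ) ≤ γ*(2-γ)*(1-γ)*(1+γ) := by
        apply mul_nonneg (mul_nonneg (mul_nonneg _ _) _) <;> linarith
      nlinarith [mul_le_mul_of_nonneg_left h2 hK]
  have key2 : ∀ t ∈ Icc (0:ℝ) 1, 0 ≤ (2-γ)*(1-γ)*γ*(1+γ)*(a-1)^(-2-γ)*t^2/2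
      - (2-γ)*(1-γ)*((a-t)^(-γ) - a^(-γ) - γ*a^(-1-γ)*t) := by
    apply nonneg_aux _ (fun t => (2-γ)*(1-γ)*γ*(1+γ)*(a-1)^(-2-γ)*t
      - γ*(2-γ)*(1-γ)*((a-t)^(-1-γ) - a^(-1-γ)))
    · norm_num
    · intro t ht
      have h1 : 0 < a - t := by have := ht.2; linarith
      have hh := (((hasDerivAt_pow 2 t).const_mul ((2-γ)*(1-γ)*γ*(1+γ)*(a-1)^(-2-γ))).div_const 2).sub
        ((((hasDerivAt_minus a (-γ) t h1).sub_const (a^(-γ))).sub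
          ((hasDerivAt_id t).const_mul (γ*a^(-1-γ)))).const_mul ((2-γ)*(1-γ)))
      rw [show (-γ-1 : ℝ) = -1-γ by ring] at hh
      exact hh.congr_deriv (by ring)
    · intro t ht
      exact key1 t ht
  have key3 : ∀ t ∈ Icc (0:ℝ) 1, 0 ≤ (2-γ)*(1-γ)*γ*(1+γ)*(a-1)^(-2-γ)*t^3/6
      - (2-γ)*(a^(1-γ) - (a-t)^(1-γ) - (1-γ)*a^(-γ)*t - (1-γ)*γ*a^(-1-γ)*t^2/2) := by
    apply nonneg_aux _ (fun t => (2-γ)*(1-γ)*γ*(1+γ)*(a-1)^(-2-γ)*t^2/2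
      - (2-γ)*(1-γ)*((a-t)^(-γ) - a^(-γ) - γ*a^(-1-γ)*t))
    · norm_num
    · intro t ht
      have h1 : 0 < a - t := by have := ht.2; linarith
      have hh := (((hasDerivAt_pow 3 t).const_mul ((2-γ)*(1-γ)*γ*(1+γ)*(a-1)^(-2-γ))).div_const 6).sub
        (((((hasDerivAt_const t (a^(1-γ))).sub (hasDerivAt_minus a (1-γ) t h1)).sub
          ((hasDerivAt_id t).const_mul ((1-γ)*a^(-γ)))).sub
          (((hasDerivAt_pow 2 t).const_mul ((1-γ)*γ*a^(-1-γ))).div_const 2)).const_mul (2-γ))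
      rw [show (1-γ-1 : ℝ) = -γ by ring] at hh
      exact hh.congr_deriv (by ring)
    · intro t ht
      exact key2 t ht
  apply nonneg_aux _ (fun t => (2-γ)*(1-γ)*γ*(1+γ)*(a-1)^(-2-γ)*t^3/6
    - (2-γ)*(a^(1-γ) - (a-t)^(1-γ) - (1-γ)*a^(-γ)*t - (1-γ)*γ*a^(-1-γ)*t^2/2))
  · norm_num
  · intro t ht
    have h1 : 0 < a - t := by have := ht.2; linarith
    have hh := (((hasDerivAt_pow 4 t).const_mul ((2-γ)*(1-γ)*γ*(1+γ)*(a-1)^(-2-γ))).div_const 24).sub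
      (((((hasDerivAt_minus a (2-γ) t h1).sub_const (a^(2-γ))).add
        ((hasDerivAt_id t).const_mul ((2-γ)*a^(1-γ)))).sub
        (((hasDerivAt_pow 2 t).const_mul ((2-γ)*(1-γ)*a^(-γ))).div_const 2)).sub
        (((hasDerivAt_pow 3 t).const_mul ((2-γ)*(1-γ)*γ*a^(-1-γ))).div_const 6))
    rw [show (2-γ-1 : ℝ) = 1-γ by ring] at hh
    exact hh.congr_deriv (by ring)
  · intro t ht
    exact key3 t ht

end chains

set_option maxHeartbeats 2000000 in
theorem stmt_7 (γ : ℝ) (hγ0 : 0 < γ) (hγ1 : γ < 1) (i : ℕ) (hi : 1 ≤ i) :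
    2 * (3 - γ) * (2 - γ) * (1 - γ) * (i : ℝ) ^ (-γ) * (1/6 - 7/60)
        ≤ 4 * (((i : ℝ) + 1) ^ (3 - γ) - ((i : ℝ) - 1) ^ (3 - γ))
            - (3 - γ) * (((i : ℝ) + 1) ^ (2 - γ) + 6 * (i : ℝ) ^ (2 - γ)
                + ((i : ℝ) - 1) ^ (2 - γ)) ∧
    0 < 2 * (3 - γ) * (2 - γ) * (1 - γ) * (i : ℝ) ^ (-γ) * (1/6 - 7/60) := by
  have hipos : (0:ℝ) < (i:ℝ) := by
    have : 0 < i := hi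
    exact_mod_cast this
  have hx : 0 < (i:ℝ)^(-γ) := Real.rpow_pos_of_pos hipos _
  constructor
  case right =>
    nlinarith [mul_pos (mul_pos (mul_pos (show (0:ℝ) < 3-γ by linarith)
      (show (0:ℝ) < 2-γ by linarith)) (show (0:ℝ) < 1-γ by linarith)) hx]
  case left =>
    rcases eq_or_lt_of_le hi with h1 | h2
    · -- i = 1
      have hi1 : (i:ℝ) = 1 := by rw [← h1]; norm_num
      rw [hi1, show (1:ℝ)+1 = 2 by norm_num, show (1:ℝ)-1 = 0 by norm_num,
        Real.zero_rpow (show (3:ℝ)-γ ≠ 0 by intro h; linarith),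
        Real.zero_rpow (show (2:ℝ)-γ ≠ 0 by intro h; linarith),
        Real.one_rpow, Real.one_rpow]
      have hL1 := Real.log_two_gt_d9
      have hL2 := Real.log_two_lt_d9
      have hLpos : 0 < Real.log 2 := by linarith
      have hq : 1 + Real.log 2 * (1-γ) + (Real.log 2 * (1-γ))^2/2 ≤ (2:ℝ)^(1-γ) := by
        rw [Real.rpow_def_of_pos two_pos]
        exact Real.quadratic_le_exp_of_nonneg (mul_nonneg hLpos.le (by linarith))
      have e4 : (2:ℝ)^(2:ℝ) = 4 := by
        rw [show (2:ℝ) = ((2:ℕ):ℝ) by norm_num, Real.rpow_natCast]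
        norm_num
      have e3 : (2:ℝ)^(3-γ) = 4*(2:ℝ)^(1-γ) := by
        rw [show (3-γ:ℝ) = 2+(1-γ) by ring, Real.rpow_add two_pos, e4]
      have e2 : (2:ℝ)^(2-γ) = 2*(2:ℝ)^(1-γ) := by
        rw [show (2-γ:ℝ) = 1+(1-γ) by ring, Real.rpow_add two_pos, Real.rpow_one]
      rw [e3, e2]
      have hxq : 0 < (2:ℝ)^(1-γ) := Real.rpow_pos_of_pos two_pos _
      have hs : (0:ℝ) < 1-γ := by linarith
      have hq2 : 1 + 0.6931471803*(1-γ) + (0.6931471803*(1-γ))^2/2 ≤ (2:ℝ)^(1-γ) := by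
        refine le_trans ?_ hq
        have h1 : 0.6931471803*(1-γ) ≤ Real.log 2*(1-γ) :=
          mul_le_mul_of_nonneg_right hL1.le hs.le
        have h2 : (0.6931471803*(1-γ))^2 ≤ (Real.log 2*(1-γ))^2 := by
          apply pow_le_pow_left₀ (by positivity) h1
        linarith
      nlinarith [mul_le_mul_of_nonneg_left hq2 (show (0:ℝ) ≤ 10+2*γ by linarith),
        hs, mul_pos hs hs, mul_nonneg (mul_nonneg hs.le hs.le) hγ0.le]
    · -- 2 ≤ i
      have ha : (2:ℝ) ≤ (i:ℝ) := by exact_mod_cast h2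
      set a : ℝ := (i:ℝ) with ha_def
      have t1 := chainP hγ0 hγ1 ha 1 (by norm_num)
      have t2 := chainG hγ0 hγ1 ha 1 (by norm_num)
      have t3 := chainS hγ0 hγ1 ha 1 (by norm_num)
      have t4 := chainZ hγ0 hγ1 ha 1 (by norm_num)
      norm_num at t1 t2 t3 t4
      have h3 : (0:ℝ) ≤ 3-γ := by linarith
      -- tail estimate
      have ha0 : (0:ℝ) < a := by linarith
      have ha1 : (0:ℝ) < a - 1 := by linarith
      have hA : a^(-2-γ) ≤ a^(-γ) * (1/4) := by
        have e : a^(-2-γ) = a^(-γ) * a^(-2:ℝ) := by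
          rw [← Real.rpow_add ha0]; ring_nf
        have e2 : a^(-2:ℝ) ≤ 1/4 := by
          have : a^(-2:ℝ) = (a^(2:ℕ))⁻¹ := by
            rw [show (-2:ℝ) = -((2:ℕ):ℝ) by norm_num, Real.rpow_neg ha0.le, Real.rpow_natCast]
          rw [this]
          rw [inv_le_comm₀ (by positivity) (by norm_num)]
          nlinarith
        calc a^(-2-γ) = a^(-γ) * a^(-2:ℝ) := e
        _ ≤ a^(-γ) * (1/4) := by
            apply mul_le_mul_of_nonneg_left e2 (Real.rpow_pos_of_pos ha0 _).le
      have hB : (a-1)^(-2-γ) ≤ 2 * a^(-γ) := by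
        have s1 : (a-1)^(-2-γ) ≤ (a-1)^(-γ) :=
          Real.rpow_le_rpow_of_exponent_le (by linarith) (by linarith)
        have s2 : (a-1)^(-γ) = (a/(a-1))^γ * a^(-γ) := by
          have hne1 : ((a-1):ℝ)^γ ≠ 0 := (Real.rpow_pos_of_pos ha1 _).ne'
          have hne2 : (a:ℝ)^γ ≠ 0 := (Real.rpow_pos_of_pos ha0 _).ne'
          rw [Real.div_rpow ha0.le (by linarith), Real.rpow_neg ha0.le, Real.rpow_neg (by linarith)]
          field_simp
        have s3 : (a/(a-1))^γ ≤ a/(a-1) := by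
          nth_rewrite 2 [← Real.rpow_one (a/(a-1))]
          apply Real.rpow_le_rpow_of_exponent_le _ hγ1.le
          rw [le_div_iff₀ ha1]
          linarith
        have s4 : a/(a-1) ≤ 2 := by
          rw [div_le_iff₀ ha1]
          linarith
        calc (a-1)^(-2-γ) ≤ (a-1)^(-γ) := s1
        _ = (a/(a-1))^γ * a^(-γ) := s2
        _ ≤ 2 * a^(-γ) := by
            apply mul_le_mul_of_nonneg_right _ hx.le
            exact s3.trans s4
      have h28 : γ*(1+γ)*(a^(-2-γ) + (a-1)^(-2-γ)) ≤ (28/5) * a^(-γ) := by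
        have hg2 : (0:ℝ) ≤ γ*(1+γ) := mul_nonneg hγ0.le (by linarith)
        have := mul_le_mul_of_nonneg_left (add_le_add hA hB) hg2
        nlinarith [mul_nonneg (show (0:ℝ) ≤ 2 - γ*(1+γ) by nlinarith) hx.le]
      have hK : (0:ℝ) ≤ (3-γ)*(2-γ)*(1-γ) := by
        apply mul_nonneg (mul_nonneg _ _) <;> linarith
      have bound_ge : 2*(3-γ)*(2-γ)*(1-γ)*a^(-γ)*(1/6-7/60)
          ≤ (3-γ)*(2-γ)*(1-γ)*a^(-γ)/3
            - (3-γ)*((2-γ)*(1-γ)*γ*(1+γ)*a^(-2-γ)/24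
              + (2-γ)*(1-γ)*γ*(1+γ)*(a-1)^(-2-γ)/24) := by
        nlinarith [mul_nonneg hK (sub_nonneg.2 h28)]
      have m3 := mul_le_mul_of_nonneg_left t3 h3
      have m4 := mul_le_mul_of_nonneg_left t4 h3
      nlinarith [t1, t2, m3, m4, bound_ge]
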